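/- For all real ξ, c, t with |ξ t| < 1, exp(−ξ² t c / (1 + ξ t)) = Σ_{n=0}^{∞} tⁿ · ( L_n(ξ² c, −ξ) + ξ · L_{n−1}(ξ² c, −ξ) ), where by convention L_{−1}(x, y) = 0 and the series on the left converges. -/

import Mathlib

open Finset

/-- The two-variable Laguerre polynomials. -/
noncomputable def laguerre2 (n : ℕ) (x y : ℝ) : ℝ :=
  (n.factorial : ℝ) * ∑ k ∈ Finset.range (n + 1),
    (-1 : ℝ) ^ k * x ^ k * y ^ (n - k) /
      (((n - k).factorial : ℝ) * (k.factorial : ℝ) ^ 2)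

theorem laguerre2_exp_expansion (ξ c t : ℝ) (h : |ξ * t| < 1) :
    HasSum
      (fun n : ℕ => t ^ n *
        (laguerre2 n (ξ ^ 2 * c) (-ξ) +
          ξ * (if n = 0 then 0 else laguerre2 (n - 1) (ξ ^ 2 * c) (-ξ))))
      (Real.exp (-(ξ ^ 2 * t * c) / (1 + ξ * t))) := by
  have hu1 : -1 < ξ * t := (abs_lt.1 h).1
  have hu2 : ξ * t < 1 := (abs_lt.1 h).2
  set u : ℝ := ξ * t with hu_def
  set a : ℝ := ξ ^ 2 * c * t with ha_def
  have h1u : (0:ℝ) < 1 + u := by linarith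
  have h1u' : (1:ℝ) + u ≠ 0 := ne_of_gt h1u
  have hnu : ‖(-u : ℝ)‖ < 1 := by rw [norm_neg, Real.norm_eq_abs]; exact h
  set B : ℕ × ℕ → ℝ := fun p =>
    (-1 : ℝ) ^ p.1 * a ^ p.1 * (-u) ^ p.2 * ((p.1 + p.2).factorial : ℝ) /
      ((p.2.factorial : ℝ) * (p.1.factorial : ℝ) ^ 2) with hB_def
  have hfac : ∀ k : ℕ, (k.factorial : ℝ) ≠ 0 :=
    fun k => Nat.cast_ne_zero.2 k.factorial_ne_zero
  have hBeq : ∀ k m : ℕ, B (k, m) =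
      ((-1 : ℝ) ^ k * a ^ k / (k.factorial : ℝ)) *
        (((m + k).choose k : ℝ) * (-u) ^ m) := by
    intro k m
    have h1 : ((m + k).choose k : ℝ) =
        ((m + k).factorial : ℝ) / ((k.factorial : ℝ) * (m.factorial : ℝ)) := by
      rw [Nat.cast_choose ℝ (Nat.le_add_left k m), Nat.add_sub_cancel]
    have h2 : ((k + m).factorial : ℝ) = ((m + k).factorial : ℝ) := by rw [Nat.add_comm]
    simp only [hB_def, h1]
    rw [h2]
    field_simp
  have hfiber : ∀ k : ℕ, HasSum (fun m => B (k, m))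
      (((-1:ℝ) ^ k * a ^ k / (k.factorial : ℝ)) * (1 / (1 + u) ^ (k + 1))) := by
    intro k
    have h0 := (hasSum_choose_mul_geometric_of_norm_lt_one k hnu).mul_left
      ((-1:ℝ) ^ k * a ^ k / (k.factorial : ℝ))
    rw [sub_neg_eq_add] at h0
    exact h0.congr_fun fun m => (hBeq k m)
  have hfiber2 : ∀ k : ℕ, HasSum (fun m => if m = 0 then 0 else u * B (k, m - 1))
      (u * (((-1:ℝ) ^ k * a ^ k / (k.factorial : ℝ)) * (1 / (1 + u) ^ (k + 1)))) := by
    intro k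
    have hinj : Function.Injective (fun m : ℕ => m + 1) := fun x y hxy => by simpa using hxy
    apply (Function.Injective.hasSum_iff hinj ?_).1
    · have := (hfiber k).mul_left u
      refine this.congr_fun fun m => ?_
      simp
    · intro m hm
      have : m = 0 := by
        by_contra h0
        exact hm ⟨m - 1, by show m - 1 + 1 = m; omega⟩
      simp [this]
  set G : ℕ × ℕ → ℝ :=
    fun p => B p + (if p.2 = 0 then 0 else u * B (p.1, p.2 - 1)) with hG_def
  have hGfiber : ∀ k : ℕ, HasSum (fun m => G (k, m))
      ((-a / (1 + u)) ^ k / (k.factorial : ℝ)) := by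
    intro k
    have h0 := (hfiber k).add (hfiber2 k)
    convert h0 using 1
    rw [div_pow, neg_pow]
    field_simp
    ring
  -- Summability
  have h1mu : (0:ℝ) < 1 - |u| := by linarith [abs_lt.2 ⟨hu1, hu2⟩]
  have hnu' : ‖|u|‖ < 1 := by rwa [Real.norm_eq_abs, abs_abs]
  have habs : ∀ k m : ℕ, |B (k, m)| =
      (|a| ^ k / (k.factorial : ℝ)) * (((m + k).choose k : ℝ) * |u| ^ m) := by
    intro k m
    rw [hBeq, abs_mul]
    congr 1
    · rw [abs_div, abs_mul, abs_pow, abs_pow, abs_neg, abs_one, one_pow, one_mul,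
        Nat.abs_cast]
    · rw [abs_mul, abs_pow, abs_neg, Nat.abs_cast]
  have habsfiber : ∀ k : ℕ, HasSum (fun m => |B (k, m)|)
      ((|a| ^ k / (k.factorial : ℝ)) * (1 / (1 - |u|) ^ (k + 1))) := by
    intro k
    have h0 := (hasSum_choose_mul_geometric_of_norm_lt_one k hnu').mul_left
      (|a| ^ k / (k.factorial : ℝ))
    exact h0.congr_fun fun m => (habs k m)
  have hsumB : Summable B := by
    apply Summable.of_norm
    rw [summable_prod_of_nonneg (fun p => norm_nonneg _)]
    constructor
    · intro k
      exact ((habsfiber k).summable).congr fun m => (Real.norm_eq_abs _).symm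
    · apply Summable.congr (f := fun k : ℕ =>
        (|a| ^ k / (k.factorial : ℝ)) * (1 / (1 - |u|) ^ (k + 1)))
      · have hs := (Real.summable_pow_div_factorial (|a| / (1 - |u|))).mul_left (1 / (1 - |u|))
        refine hs.congr fun k => ?_
        have hne : (1 - |u|) ≠ 0 := ne_of_gt h1mu
        rw [div_pow, pow_succ]
        field_simp
        try ring_nf
        try exact Or.inl trivial
      · intro k
        rw [← (habsfiber k).tsum_eq]
        exact (tsum_congr fun m => (Real.norm_eq_abs _).symm)
  have hsumSh : Summable (fun p : ℕ × ℕ => if p.2 = 0 then 0 else u * B (p.1, p.2 - 1)) := by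
    have hinj : Function.Injective (fun p : ℕ × ℕ => (p.1, p.2 + 1)) := by
      intro p q hpq
      simp only [Prod.ext_iff] at hpq ⊢
      omega
    apply (Function.Injective.summable_iff hinj ?_).1
    · refine (hsumB.mul_left u).congr fun p => ?_
      simp
    · rintro ⟨k, m⟩ hp
      have : m = 0 := by
        by_contra h0
        exact hp ⟨(k, m - 1), by simp; omega⟩
      simp [this]
  have hsumG : Summable G := hsumB.add hsumSh
  have hexp : HasSum (fun k : ℕ => (-a / (1 + u)) ^ k / (k.factorial : ℝ))
      (Real.exp (-a / (1 + u))) := by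
    rw [Real.exp_eq_exp_ℝ]
    exact NormedSpace.expSeries_div_hasSum_exp (𝔸 := ℝ) _
  have hGsum : HasSum G (Real.exp (-a / (1 + u))) := by
    have h1 := hsumG.hasSum
    have h2 := h1.prod_fiberwise hGfiber
    rwa [h2.unique hexp] at h1
  have hGsig := (Finset.HasAntidiagonal.sigmaAntidiagonalEquivProd.hasSum_iff).2 hGsum
  have hstep : HasSum (fun n : ℕ => ∑ p ∈ Finset.HasAntidiagonal.antidiagonal n, G p)
      (Real.exp (-a / (1 + u))) := by
    apply hGsig.sigma
    intro n
    have h0 := hasSum_fintype (fun p : (Finset.HasAntidiagonal.antidiagonal n : Finset (ℕ × ℕ)) => G p.1)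
    rwa [Finset.sum_coe_sort] at h0
  -- finite combinatorial identity
  have hkey : ∀ n : ℕ, ∑ k ∈ Finset.range (n + 1), B (k, n - k) =
      t ^ n * laguerre2 n (ξ ^ 2 * c) (-ξ) := by
    intro n
    rw [laguerre2, Finset.mul_sum, Finset.mul_sum]
    apply Finset.sum_congr rfl
    intro k hk
    have hkn : k ≤ n := by
      simp only [Finset.mem_range] at hk; omega
    obtain ⟨m, rfl⟩ : ∃ m, n = k + m := ⟨n - k, by omega⟩
    have hm : k + m - k = m := by omega
    rw [hm]
    simp only [hB_def, ha_def, hu_def]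
    rw [pow_add]
    have hmul : (-(ξ * t)) ^ m = (-ξ) ^ m * t ^ m := by
      rw [← neg_mul, mul_pow]
    rw [hmul]
    field_simp
    ring
  have hfinal : ∀ n : ℕ, ∑ p ∈ Finset.HasAntidiagonal.antidiagonal n, G p =
      t ^ n * (laguerre2 n (ξ ^ 2 * c) (-ξ) +
        ξ * (if n = 0 then 0 else laguerre2 (n - 1) (ξ ^ 2 * c) (-ξ))) := by
    intro n
    rw [Finset.Nat.sum_antidiagonal_eq_sum_range_succ_mk]
    simp only [hG_def]
    rw [Finset.sum_add_distrib, hkey n]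
    rcases Nat.eq_zero_or_pos n with rfl | hn
    · simp
    · have hn0 : n ≠ 0 := by omega
      have hsplit : (∑ k ∈ Finset.range (n + 1),
          (if n - k = 0 then 0 else u * B (k, n - k - 1))) =
          u * ∑ k ∈ Finset.range n, B (k, n - 1 - k) := by
        rw [Finset.sum_range_succ, Nat.sub_self, if_pos rfl, add_zero, Finset.mul_sum]
        apply Finset.sum_congr rfl
        intro k hk
        simp only [Finset.mem_range] at hk
        rw [if_neg (by omega)]
        have : n - k - 1 = n - 1 - k := by omega
        rw [this]
      rw [hsplit]
      have h2 : ∑ k ∈ Finset.range n, B (k, n - 1 - k) =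
          t ^ (n - 1) * laguerre2 (n - 1) (ξ ^ 2 * c) (-ξ) := by
        have h3 := hkey (n - 1)
        rwa [show n - 1 + 1 = n by omega] at h3
      rw [h2, if_neg hn0]
      rw [hu_def]
      rw [show n = n - 1 + 1 by omega, pow_succ]
      simp only [Nat.add_sub_cancel]
      ring
  have hfe : (fun n : ℕ => ∑ p ∈ Finset.HasAntidiagonal.antidiagonal n, G p) =
      fun n : ℕ => t ^ n * (laguerre2 n (ξ ^ 2 * c) (-ξ) +
        ξ * (if n = 0 then 0 else laguerre2 (n - 1) (ξ ^ 2 * c) (-ξ))) := funext hfinal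
  have hval : -a / (1 + u) = -(ξ ^ 2 * t * c) / (1 + u) := by
    rw [ha_def]; ring_nf
  rw [hfe, hval] at hstep
  exact hstep
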